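/- Let κ be an uncountable cardinal with κ^{<κ} = κ. Suppose T is a closed κ⁺,κ-tree and h is a function on T such that h assigns a κ-Borel subset of 2^κ to each leaf of T and the symbol ∪ or ∩ to every other node. Then the set {η ∈ 2^κ : player II has a winning strategy in the game B*(T,h,η)} is a Borel* set. -/

import Mathlib

noncomputable section

open Cardinal Set

namespace GenCantor

/-- The set of ordinals below `κ`, used as the domain `κ` of coded structures. -/
abbrev O (κ : Cardinal.{0}) : Type 1 := ↥(Set.Iio κ.ord)

/-- The generalized Cantor space `2^κ`. -/
abbrev Point (κ : Cardinal.{0}) : Type 1 := O κ → Bool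

/-- The basic open set `[ζ]` determined by the restriction of `ζ` to the ordinals below `β`. -/
def basicOpen (κ : Cardinal.{0}) (β : Ordinal) (ζ : O κ → Bool) : Set (Point κ) :=
  {η | ∀ γ : O κ, (γ : Ordinal) < β → η γ = ζ γ}

/-- The collection of basic open subsets of `2^κ`. -/
def basicOpens (κ : Cardinal.{0}) : Set (Set (Point κ)) :=
  {s | ∃ β < κ.ord, ∃ ζ, s = basicOpen κ β ζ}

/-- The bounded topology on `2^κ`, generated by the basic open sets. -/
def boundedTopology (κ : Cardinal.{0}) : TopologicalSpace (Point κ) :=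
  TopologicalSpace.generateFrom (basicOpens κ)

/-- Partial sequences of elements of `κ`: a node of the tree `κ^{<κ}` is represented by a
function `Ordinal → Option (O κ)` whose support is an initial segment `Iio β`, `β < κ`. -/
abbrev PreSeq (κ : Cardinal.{0}) : Type 1 := Ordinal → Option (O κ)

/-- `f` represents a sequence of ordinals `< κ` of length `< κ`. -/
def IsSeq (κ : Cardinal.{0}) (f : PreSeq κ) : Prop :=
  ∃ β < κ.ord, ∀ γ, (f γ).isSome ↔ γ < β

/-- The (initial segment) tree order on sequences. -/
def seqLE {κ : Cardinal.{0}} (f g : PreSeq κ) : Prop :=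
  ∀ γ x, f γ = some x → g γ = some x

/-- The empty sequence, the root of a tree of sequences. -/
def seqRoot (κ : Cardinal.{0}) : PreSeq κ := fun _ => none

/-- The supremum (union) of a chain of sequences. -/
def seqSup {κ : Cardinal.{0}} (c : Set (PreSeq κ)) : PreSeq κ :=
  fun γ => open scoped Classical in
    if h : ∃ x, ∃ f ∈ c, f γ = some x then some h.choose else none


/-- `g` is an immediate successor of `f` in the tree `T`. -/
def ImmSucc {κ : Cardinal.{0}} (T : Set (PreSeq κ)) (f g : PreSeq κ) : Prop :=
  g ∈ T ∧ seqLE f g ∧ f ≠ g ∧ ∀ h ∈ T, seqLE f h → seqLE h g → h = f ∨ h = g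

/-- `f` is a leaf of the tree `T`. -/
def IsLeaf {κ : Cardinal.{0}} (T : Set (PreSeq κ)) (f : PreSeq κ) : Prop :=
  f ∈ T ∧ ∀ g ∈ T, seqLE f g → g = f

/-- Labels for the nodes of a `Borel*`-code over the space `Z`: every non-leaf node is
labelled `∩` or `∪`, and every leaf is labelled by a subset of `Z`. -/
inductive BLabel (Z : Type*) : Type _ where
  | inter : BLabel Z
  | union : BLabel Z
  | leaf : Set Z → BLabel Z

/-- A `Borel*`-code over the space `Z` whose leaf labels are members of the family
`Basic` of subsets of `Z` (for genuine `Borel*`-codes, `Basic` is the family of basic open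
sets): a closed `κ⁺,κ`-tree, presented as a downward closed subtree of `κ^{<κ}` of
cardinality `≤ κ` with no chains of length `κ` in which every chain has a (unique)
supremum, together with a labelling `h` of its nodes. -/
structure BorelStarCode (κ : Cardinal.{0}) (Z : Type*) (Basic : Set (Set Z)) where
  T : Set (PreSeq κ)
  h : PreSeq κ → BLabel Z
  mem_isSeq : ∀ f ∈ T, IsSeq κ f
  root_mem : seqRoot κ ∈ T
  downward : ∀ f ∈ T, ∀ g, IsSeq κ g → seqLE g f → g ∈ T
  card_le : Cardinal.mk ↥T ≤ Cardinal.lift.{1} κ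
  no_long_chain : ∀ c ⊆ T, IsChain seqLE c → Cardinal.mk ↥c < Cardinal.lift.{1} κ
  chain_sup : ∀ c ⊆ T, c.Nonempty → IsChain seqLE c → seqSup c ∈ T
  label_leaf : ∀ f ∈ T, IsLeaf T f → ∃ s ∈ Basic, h f = BLabel.leaf s
  label_node : ∀ f ∈ T, ¬ IsLeaf T f → h f = BLabel.inter ∨ h f = BLabel.union

/-- The positions of the game `B*(T, h, x)` that can be reached when player II plays
according to the strategy `σ`: the game starts at the root; at a node labelled `∩`
player I chooses an immediate successor, at a node labelled `∪` player II moves according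
to `σ`, and at a limit the game continues from the supremum of the previous moves. -/
inductive Reach {κ : Cardinal.{0}} {Z : Type*} {Basic : Set (Set Z)}
    (code : BorelStarCode κ Z Basic) (σ : PreSeq κ → PreSeq κ) : PreSeq κ → Prop where
  | root : Reach code σ (seqRoot κ)
  | inter (f g : PreSeq κ) : Reach code σ f → code.h f = BLabel.inter →
      ImmSucc code.T f g → Reach code σ g
  | union (f : PreSeq κ) : Reach code σ f → code.h f = BLabel.union →
      Reach code σ (σ f)
  | lim (c : Set (PreSeq κ)) : c.Nonempty → IsChain seqLE c →
      (∀ f ∈ c, Reach code σ f) → Reach code σ (seqSup c)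

/-- Player II has a winning strategy in the game `B*(T, h, x)`: a strategy `σ` which
always chooses an immediate successor at reachable `∪`-nodes, and such that `x` belongs to
the label of every reachable leaf. -/
def IIWinsBStar {κ : Cardinal.{0}} {Z : Type*} {Basic : Set (Set Z)}
    (code : BorelStarCode κ Z Basic) (x : Z) : Prop :=
  ∃ σ : PreSeq κ → PreSeq κ,
    (∀ f, Reach code σ f → code.h f = BLabel.union → ImmSucc code.T f (σ f)) ∧
    (∀ f s, Reach code σ f → code.h f = BLabel.leaf s → x ∈ s)

/-- `B` is a `Borel*` subset of `Z` (with respect to the family `Basic` of basic open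
subsets of `Z`): there is a `Borel*`-code such that `B` is the set of points for which
player II has a winning strategy in the associated game. -/
def IsBorelStar (κ : Cardinal.{0}) {Z : Type*} (Basic : Set (Set Z)) (B : Set Z) : Prop :=
  ∃ code : BorelStarCode κ Z Basic, B = {x | IIWinsBStar code x}


/-- The `κ`-Borel subsets of `2^κ`: the smallest collection of sets containing the basic
open sets and closed under unions and intersections of length (at most) `κ`. -/
inductive IsKBorel (κ : Cardinal.{0}) : Set (Point κ) → Prop where
  | basic : ∀ s ∈ basicOpens κ, IsKBorel κ s
  | iUnion (ι : Type) (hι : Cardinal.mk ι ≤ κ) (f : ι → Set (Point κ)) :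
      (∀ i, IsKBorel κ (f i)) → IsKBorel κ (⋃ i, f i)
  | iInter (ι : Type) (hι : Cardinal.mk ι ≤ κ) (f : ι → Set (Point κ)) :
      (∀ i, IsKBorel κ (f i)) → IsKBorel κ (⋂ i, f i)

/-! ### Basic lemmas about sequences -/

section Basics

variable {κ : Cardinal.{0}}

lemma option_ext {α : Type*} {a b : Option α} (h : ∀ x, a = some x ↔ b = some x) : a = b := by
  cases a with
  | none => cases b with
    | none => rfl
    | some y => exact ((h y).2 rfl).symm ▸ rfl
  | some x => exact ((h x).1 rfl).symm

lemma seqLE_refl (f : PreSeq κ) : seqLE f f := fun _ _ h => h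

lemma seqLE_trans {f g h : PreSeq κ} (h1 : seqLE f g) (h2 : seqLE g h) : seqLE f h :=
  fun γ x hx => h2 γ x (h1 γ x hx)

lemma seqLE_antisymm {f g : PreSeq κ} (h1 : seqLE f g) (h2 : seqLE g f) : f = g := by
  funext γ
  refine option_ext fun x => ⟨fun hx => h1 γ x hx, fun hx => h2 γ x hx⟩

lemma seqRoot_seqLE (f : PreSeq κ) : seqLE (seqRoot κ) f := by
  intro γ x hx; simp [seqRoot] at hx

lemma seqLE_seqRoot {f : PreSeq κ} (h : seqLE f (seqRoot κ)) : f = seqRoot κ := by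
  funext γ
  refine option_ext fun x => ⟨fun hx => h γ x hx, fun hx => by simp [seqRoot] at hx⟩

lemma isSeq_seqRoot (hκ : 0 < κ) : IsSeq κ (seqRoot κ) := by
  refine ⟨0, ?_, fun γ => by simp [seqRoot]⟩
  rw [← Cardinal.ord_zero]
  exact Cardinal.ord_lt_ord.2 hκ

lemma some_eq_some_symm {α : Type*} {x y : α} (h : some x = some y) : x = y :=
  Option.some_injective _ h

lemma chain_agree {c : Set (PreSeq κ)} (hc : IsChain seqLE c) {f g : PreSeq κ}
    (hf : f ∈ c) (hg : g ∈ c) {γ : Ordinal} {x y : O κ}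
    (hx : f γ = some x) (hy : g γ = some y) : x = y := by
  rcases eq_or_ne f g with rfl | hne
  · rw [hx] at hy; exact some_eq_some_symm hy
  · rcases hc hf hg hne with h | h
    · have := h γ x hx; rw [this] at hy; exact some_eq_some_symm hy
    · have := h γ y hy; rw [this] at hx; exact (some_eq_some_symm hx).symm

/-! ### Length of a sequence -/

lemma len_aux_unique {f : PreSeq κ} {β β' : Ordinal}
    (h : ∀ γ, (f γ).isSome ↔ γ < β) (h' : ∀ γ, (f γ).isSome ↔ γ < β') : β = β' := by
  by_contra hne
  rcases lt_or_gt_of_ne hne with hlt | hlt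
  · exact absurd ((h β).1 ((h' β).2 hlt)) (lt_irrefl β)
  · exact absurd ((h' β').1 ((h β').2 hlt)) (lt_irrefl β')

/-- The length of a sequence. -/
noncomputable def len (f : PreSeq κ) : Ordinal :=
  open scoped Classical in
  if h : ∃ β : Ordinal, ∀ γ, (f γ).isSome ↔ γ < β then h.choose else 0

lemma len_eq {f : PreSeq κ} {β : Ordinal} (hβ : ∀ γ, (f γ).isSome ↔ γ < β) : len f = β := by
  have h : ∃ β : Ordinal, ∀ γ, (f γ).isSome ↔ γ < β := ⟨β, hβ⟩
  rw [len, dif_pos h]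
  exact len_aux_unique h.choose_spec hβ

lemma len_spec {f : PreSeq κ} (hf : IsSeq κ f) : ∀ γ, (f γ).isSome ↔ γ < len f := by
  obtain ⟨β, -, hβ⟩ := hf
  rw [len_eq hβ]; exact hβ

lemma len_lt {f : PreSeq κ} (hf : IsSeq κ f) : len f < κ.ord := by
  obtain ⟨β, hβκ, hβ⟩ := hf
  rwa [len_eq hβ]

lemma isSome_iff_exists {α : Type*} {a : Option α} : a.isSome ↔ ∃ x, a = some x := by
  cases a <;> simp

lemma eq_none_of_not_isSome {α : Type*} {a : Option α} (h : ¬ a.isSome) : a = none := by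
  cases a <;> simp_all

lemma isSome_of_eq_some {α : Type*} {a : Option α} {x : α} (h : a = some x) : a.isSome := by
  rw [h]; rfl

/-- Two initial segments of the same function are comparable. -/
lemma initial_comparable {f g p : PreSeq κ} (hf : IsSeq κ f) (hg : IsSeq κ g)
    (h1 : seqLE f p) (h2 : seqLE g p) : seqLE f g ∨ seqLE g f := by
  rcases le_total (len f) (len g) with hle | hle
  · left
    intro γ x hx
    have hγ : γ < len f := (len_spec hf γ).1 (isSome_of_eq_some hx)
    obtain ⟨y, hy⟩ := isSome_iff_exists.1 ((len_spec hg γ).2 (hγ.trans_le hle))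
    have hyx : y = x := some_eq_some_symm ((h2 γ y hy).symm.trans (h1 γ x hx))
    exact hyx ▸ hy
  · right
    intro γ x hx
    have hγ : γ < len g := (len_spec hg γ).1 (isSome_of_eq_some hx)
    obtain ⟨y, hy⟩ := isSome_iff_exists.1 ((len_spec hf γ).2 (hγ.trans_le hle))
    have hyx : y = x := some_eq_some_symm ((h1 γ y hy).symm.trans (h2 γ x hx))
    exact hyx ▸ hy

end Basics

/-! ### Suprema of chains -/

section Sup

variable {κ : Cardinal.{0}}

lemma seqSup_some_iff {c : Set (PreSeq κ)} (hc : IsChain seqLE c) {γ : Ordinal} {x : O κ} :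
    seqSup c γ = some x ↔ ∃ f ∈ c, f γ = some x := by
  unfold seqSup
  split
  · rename_i h
    obtain ⟨f, hf, hfγ⟩ := h.choose_spec
    constructor
    · rintro hx
      exact ⟨f, hf, by rwa [some_eq_some_symm hx] at hfγ⟩
    · rintro ⟨g, hg, hgγ⟩
      exact congrArg some (chain_agree hc hf hg hfγ hgγ)
  · rename_i h
    constructor
    · intro hx; cases hx
    · rintro ⟨f, hf, hfγ⟩
      exact absurd ⟨x, f, hf, hfγ⟩ h

lemma le_seqSup {c : Set (PreSeq κ)} (hc : IsChain seqLE c) {f : PreSeq κ} (hf : f ∈ c) :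
    seqLE f (seqSup c) := by
  intro γ x hx
  exact (seqSup_some_iff hc).2 ⟨f, hf, hx⟩

lemma seqSup_eq_of_max {c : Set (PreSeq κ)} (hc : IsChain seqLE c) {m : PreSeq κ}
    (hm : m ∈ c) (hub : ∀ f ∈ c, seqLE f m) : seqSup c = m := by
  funext γ
  refine option_ext fun x => ?_
  rw [seqSup_some_iff hc]
  exact ⟨fun ⟨f, hf, hfγ⟩ => hub f hf γ x hfγ, fun hx => ⟨m, hm, hx⟩⟩

lemma seqSup_eq_seqSup {c d : Set (PreSeq κ)} (hc : IsChain seqLE c) (hdc : d ⊆ c)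
    (hcof : ∀ f ∈ c, ∃ g ∈ d, seqLE f g) : seqSup c = seqSup d := by
  have hd : IsChain seqLE d := hc.mono hdc
  funext γ
  refine option_ext fun x => ?_
  rw [seqSup_some_iff hc, seqSup_some_iff hd]
  constructor
  · rintro ⟨f, hf, hfγ⟩
    obtain ⟨g, hg, hfg⟩ := hcof f hf
    exact ⟨g, hg, hfg γ x hfγ⟩
  · rintro ⟨g, hg, hgγ⟩
    exact ⟨g, hdc hg, hgγ⟩

end Sup

/-! ### Appending and shifting sequences -/

section Append

variable {κ : Cardinal.{0}}

/-- Concatenation of two sequences. -/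
noncomputable def appendSeq (ℓ f : PreSeq κ) : PreSeq κ :=
  open scoped Classical in
  fun γ => if γ < len ℓ then ℓ γ else f (γ - len ℓ)

/-- The tail of `f` after the initial segment `ℓ`. -/
def shiftSeq (ℓ f : PreSeq κ) : PreSeq κ := fun γ => f (len ℓ + γ)

lemma appendSeq_lt {ℓ f : PreSeq κ} {γ : Ordinal} (h : γ < len ℓ) :
    appendSeq ℓ f γ = ℓ γ := if_pos h

lemma appendSeq_ge {ℓ f : PreSeq κ} {γ : Ordinal} (h : ¬ γ < len ℓ) :
    appendSeq ℓ f γ = f (γ - len ℓ) := if_neg h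

lemma appendSeq_add (ℓ f : PreSeq κ) (γ : Ordinal) :
    appendSeq ℓ f (len ℓ + γ) = f γ := by
  rw [appendSeq_ge (by simp), Ordinal.add_sub_cancel]

lemma shiftSeq_appendSeq (ℓ f : PreSeq κ) : shiftSeq ℓ (appendSeq ℓ f) = f := by
  funext γ; exact appendSeq_add ℓ f γ

lemma appendSeq_injective {ℓ f g : PreSeq κ} (h : appendSeq ℓ f = appendSeq ℓ g) : f = g := by
  rw [← shiftSeq_appendSeq ℓ f, ← shiftSeq_appendSeq ℓ g, h]

lemma seqLE_appendSeq {ℓ : PreSeq κ} (hℓ : IsSeq κ ℓ) (f : PreSeq κ) :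
    seqLE ℓ (appendSeq ℓ f) := by
  intro γ x hx
  rw [appendSeq_lt ((len_spec hℓ γ).1 (isSome_of_eq_some hx))]
  exact hx

lemma appendSeq_seqRoot {ℓ : PreSeq κ} (hℓ : IsSeq κ ℓ) : appendSeq ℓ (seqRoot κ) = ℓ := by
  funext γ
  by_cases h : γ < len ℓ
  · exact appendSeq_lt h
  · rw [appendSeq_ge h]
    exact (eq_none_of_not_isSome fun hs => h ((len_spec hℓ γ).1 hs)).symm

lemma appendSeq_shiftSeq {ℓ f : PreSeq κ} (hℓ : IsSeq κ ℓ) (hlf : seqLE ℓ f) :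
    appendSeq ℓ (shiftSeq ℓ f) = f := by
  funext γ
  by_cases h : γ < len ℓ
  · rw [appendSeq_lt h]
    refine option_ext fun x => ⟨fun hx => hlf γ x hx, fun hx => ?_⟩
    obtain ⟨y, hy⟩ := isSome_iff_exists.1 ((len_spec hℓ γ).2 h)
    have := hlf γ y hy
    rw [hy]; rw [this] at hx; exact congrArg some (some_eq_some_symm hx)
  · rw [appendSeq_ge h, shiftSeq, Ordinal.add_sub_cancel_of_le (not_lt.1 h)]

lemma shiftSeq_mono {ℓ f g : PreSeq κ} (h : seqLE f g) : seqLE (shiftSeq ℓ f) (shiftSeq ℓ g) :=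
  fun γ x hx => h _ x hx

lemma appendSeq_le_appendSeq {ℓ f g : PreSeq κ} :
    seqLE (appendSeq ℓ f) (appendSeq ℓ g) ↔ seqLE f g := by
  constructor
  · intro h γ x hx
    have := h (len ℓ + γ) x (by rwa [appendSeq_add])
    rwa [appendSeq_add] at this
  · intro h γ x hx
    by_cases hγ : γ < len ℓ
    · rwa [appendSeq_lt hγ] at hx ⊢
    · rw [appendSeq_ge hγ] at hx ⊢
      exact h _ x hx

lemma isSeq_shiftSeq {ℓ f : PreSeq κ} (hf : IsSeq κ f) :
    IsSeq κ (shiftSeq ℓ f) := by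
  refine ⟨len f - len ℓ, lt_of_le_of_lt (Ordinal.sub_le_self _ _) (len_lt hf), fun γ => ?_⟩
  rw [shiftSeq, len_spec hf, Ordinal.lt_sub]

lemma len_shiftSeq {ℓ f : PreSeq κ} (hf : IsSeq κ f) :
    len (shiftSeq ℓ f) = len f - len ℓ := by
  refine len_eq fun γ => ?_
  rw [shiftSeq, len_spec hf, Ordinal.lt_sub]

lemma ord_add_lt {α β : Ordinal} (hκ : ℵ₀ ≤ κ) (hα : α < κ.ord) (hβ : β < κ.ord) :
    α + β < κ.ord := by
  rw [Cardinal.lt_ord] at hα hβ ⊢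
  rw [Ordinal.card_add]
  exact Cardinal.add_lt_of_lt hκ hα hβ

lemma isSeq_appendSeq {ℓ f : PreSeq κ} (hκ : ℵ₀ ≤ κ) (hℓ : IsSeq κ ℓ) (hf : IsSeq κ f) :
    IsSeq κ (appendSeq ℓ f) := by
  refine ⟨len ℓ + len f, ord_add_lt hκ (len_lt hℓ) (len_lt hf), fun γ => ?_⟩
  by_cases h : γ < len ℓ
  · rw [appendSeq_lt h, len_spec hℓ]
    exact ⟨fun _ => h.trans_le le_self_add, fun _ => h⟩
  · rw [appendSeq_ge h, len_spec hf]
    have hle : len ℓ ≤ γ := not_lt.1 h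
    constructor
    · intro hlt
      calc γ = len ℓ + (γ - len ℓ) := (Ordinal.add_sub_cancel_of_le hle).symm
      _ < len ℓ + len f := by rwa [add_lt_add_iff_left]
    · intro hlt
      rw [← Ordinal.add_sub_cancel_of_le hle, add_lt_add_iff_left] at hlt
      exact hlt

lemma seqSup_appendSeq {ℓ : PreSeq κ} (hℓ : IsSeq κ ℓ) {d : Set (PreSeq κ)}
    (hd : IsChain seqLE d) (hne : d.Nonempty) :
    seqSup (appendSeq ℓ '' d) = appendSeq ℓ (seqSup d) := by
  have hd' : IsChain seqLE (appendSeq ℓ '' d) := by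
    rintro _ ⟨f, hf, rfl⟩ _ ⟨g, hg, rfl⟩ hne'
    have hfg : f ≠ g := fun h => hne' (by rw [h])
    rcases hd hf hg hfg with h | h
    · exact Or.inl (appendSeq_le_appendSeq.2 h)
    · exact Or.inr (appendSeq_le_appendSeq.2 h)
  funext γ
  refine option_ext fun x => ?_
  rw [seqSup_some_iff hd']
  by_cases h : γ < len ℓ
  · rw [appendSeq_lt h]
    constructor
    · rintro ⟨_, ⟨f, hf, rfl⟩, hfγ⟩
      rwa [appendSeq_lt h] at hfγ
    · intro hx
      obtain ⟨f, hf⟩ := hne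
      exact ⟨appendSeq ℓ f, ⟨f, hf, rfl⟩, by rwa [appendSeq_lt h]⟩
  · rw [appendSeq_ge h, seqSup_some_iff hd]
    constructor
    · rintro ⟨_, ⟨f, hf, rfl⟩, hfγ⟩
      rw [appendSeq_ge h] at hfγ
      exact ⟨f, hf, hfγ⟩
    · rintro ⟨f, hf, hfγ⟩
      exact ⟨appendSeq ℓ f, ⟨f, hf, rfl⟩, by rwa [appendSeq_ge h]⟩

lemma shiftSeq_self {ℓ : PreSeq κ} (hℓ : IsSeq κ ℓ) : shiftSeq ℓ ℓ = seqRoot κ := by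
  funext γ
  refine eq_none_of_not_isSome ?_
  rw [shiftSeq, len_spec hℓ]
  simp

end Append

/-! ### Leaves and the trivial code -/

section Trivial

variable {κ : Cardinal.{0}} {Z : Type*} {Basic : Set (Set Z)}

lemma leaf_unique {T : Set (PreSeq κ)} (hseq : ∀ f ∈ T, IsSeq κ f)
    {ℓ₁ ℓ₂ f : PreSeq κ} (h1 : IsLeaf T ℓ₁) (h2 : IsLeaf T ℓ₂)
    (hle1 : seqLE ℓ₁ f) (hle2 : seqLE ℓ₂ f) : ℓ₁ = ℓ₂ := by
  rcases initial_comparable (hseq _ h1.1) (hseq _ h2.1) hle1 hle2 with h | h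
  · exact (h1.2 ℓ₂ h2.1 h).symm
  · exact h2.2 ℓ₁ h1.1 h

lemma one_le_lift {κ : Cardinal.{0}} (hκ : ℵ₀ < κ) : (1 : Cardinal.{1}) ≤ Cardinal.lift.{1} κ :=
  le_trans (le_of_lt Cardinal.one_lt_aleph0) (Cardinal.aleph0_le_lift.2 hκ.le)

lemma exists_trivial_code (hκ : ℵ₀ < κ) {s₀ : Set Z} (hs : s₀ ∈ Basic) :
    ∃ code : BorelStarCode κ Z Basic, {x | IIWinsBStar code x} = s₀ := by
  have hκ0 : 0 < κ := lt_trans Cardinal.aleph0_pos hκ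
  refine ⟨⟨{seqRoot κ}, fun _ => BLabel.leaf s₀, ?_, rfl, ?_, ?_, ?_, ?_, ?_, ?_⟩, ?_⟩
  · rintro f rfl
    exact isSeq_seqRoot hκ0
  · rintro f rfl g _ hg
    exact seqLE_seqRoot hg
  · rw [Cardinal.mk_singleton]
    exact one_le_lift hκ
  · intro c hc _
    calc Cardinal.mk c ≤ Cardinal.mk ({seqRoot κ} : Set (PreSeq κ)) :=
          Cardinal.mk_le_mk_of_subset hc
    _ = 1 := Cardinal.mk_singleton _
    _ < ℵ₀ := Cardinal.one_lt_aleph0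
    _ ≤ Cardinal.lift.{1} κ := Cardinal.aleph0_le_lift.2 hκ.le
  · intro c hc hne hchain
    obtain ⟨f, hf⟩ := hne
    have hfr : f = seqRoot κ := hc hf
    subst hfr
    rw [seqSup_eq_of_max hchain hf (fun g hg => by rw [hc hg]; exact seqLE_refl _)]
    exact rfl
  · intro f _ _
    exact ⟨s₀, hs, rfl⟩
  · rintro f rfl hnl
    refine absurd ⟨rfl, fun g hg _ => hg⟩ hnl
  · ext x
    simp only [Set.mem_setOf_eq]
    constructor
    · rintro ⟨σ, _, h2⟩
      exact h2 (seqRoot κ) s₀ Reach.root rfl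
    · intro hx
      refine ⟨id, fun f _ hu => (by cases hu), fun f s _ hs' => ?_⟩
      injection hs' with h
      exact h ▸ hx

end Trivial

/-! ### Grafting codes onto the leaves of a code -/

section Graft

variable {κ : Cardinal.{0}} {Z : Type*} {Basic Basic' : Set (Set Z)}
variable (code : BorelStarCode κ Z Basic') (C : PreSeq κ → BorelStarCode κ Z Basic)

/-- The tree obtained by grafting the tree of `C ℓ` onto each leaf `ℓ` of `code.T`. -/
def graftT : Set (PreSeq κ) :=
  code.T ∪ {f | ∃ ℓ, IsLeaf code.T ℓ ∧ ∃ g ∈ (C ℓ).T, f = appendSeq ℓ g}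

/-- The labelling of the grafted tree. -/
noncomputable def grafth (f : PreSeq κ) : BLabel Z :=
  open scoped Classical in
  if h : ∃ ℓ, IsLeaf code.T ℓ ∧ seqLE ℓ f then (C h.choose).h (shiftSeq h.choose f)
  else code.h f

lemma grafth_eq {ℓ f : PreSeq κ} (hℓ : IsLeaf code.T ℓ) (hle : seqLE ℓ f) :
    grafth code C f = (C ℓ).h (shiftSeq ℓ f) := by
  have h : ∃ ℓ, IsLeaf code.T ℓ ∧ seqLE ℓ f := ⟨ℓ, hℓ, hle⟩
  rw [grafth, dif_pos h]
  obtain ⟨h1, h2⟩ := h.choose_spec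
  rw [leaf_unique code.mem_isSeq h1 hℓ h2 hle]

lemma grafth_eq' {f : PreSeq κ} (h : ¬ ∃ ℓ, IsLeaf code.T ℓ ∧ seqLE ℓ f) :
    grafth code C f = code.h f := dif_neg h

lemma leafBelow_iff {f : PreSeq κ} (hf : f ∈ code.T) :
    (∃ ℓ, IsLeaf code.T ℓ ∧ seqLE ℓ f) ↔ IsLeaf code.T f :=
  ⟨fun ⟨_, hℓ, hle⟩ => (hℓ.2 f hf hle).symm ▸ hℓ, fun h => ⟨f, h, seqLE_refl f⟩⟩

lemma seqLE_leaf_append {ℓ : PreSeq κ} (hℓ : IsLeaf code.T ℓ) (g : PreSeq κ) :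
    seqLE ℓ (appendSeq ℓ g) := seqLE_appendSeq (code.mem_isSeq ℓ hℓ.1) g

lemma mem_graftT_branch {ℓ g : PreSeq κ} (hℓ : IsLeaf code.T ℓ) (hg : g ∈ (C ℓ).T) :
    appendSeq ℓ g ∈ graftT code C := Or.inr ⟨ℓ, hℓ, g, hg, rfl⟩

lemma mem_branch {f ℓ : PreSeq κ} (hf : f ∈ graftT code C) (hℓ : IsLeaf code.T ℓ)
    (hle : seqLE ℓ f) : shiftSeq ℓ f ∈ (C ℓ).T ∧ f = appendSeq ℓ (shiftSeq ℓ f) := by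
  have hℓseq := code.mem_isSeq ℓ hℓ.1
  rcases hf with hf | ⟨ℓ', hℓ', g, hg, rfl⟩
  · have hfℓ : f = ℓ := hℓ.2 f hf hle
    subst hfℓ
    rw [shiftSeq_self hℓseq]
    exact ⟨(C f).root_mem, (appendSeq_seqRoot hℓseq).symm⟩
  · have hee : ℓ = ℓ' := leaf_unique code.mem_isSeq hℓ hℓ' hle (seqLE_leaf_append code hℓ' g)
    subst hee
    rw [shiftSeq_appendSeq]
    exact ⟨hg, rfl⟩

lemma immSucc_lift {f g : PreSeq κ} (hg : g ∈ code.T) (h : ImmSucc code.T f g) :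
    ImmSucc (graftT code C) f g := by
  refine ⟨Or.inl hg, h.2.1, h.2.2.1, ?_⟩
  rintro p (hp | ⟨ℓ, hℓ, q, hq, rfl⟩) hfp hpg
  · exact h.2.2.2 p hp hfp hpg
  · have hlg : seqLE ℓ g := seqLE_trans (seqLE_leaf_append code hℓ q) hpg
    have hgl : g = ℓ := hℓ.2 g hg hlg
    have : appendSeq ℓ q = ℓ :=
      seqLE_antisymm (hgl ▸ hpg) (seqLE_leaf_append code hℓ q)
    rw [this] at hfp hpg ⊢
    exact h.2.2.2 ℓ hℓ.1 hfp hpg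

lemma immSucc_restrict {f g : PreSeq κ} (hg : g ∈ code.T)
    (h : ImmSucc (graftT code C) f g) : ImmSucc code.T f g :=
  ⟨hg, h.2.1, h.2.2.1, fun p hp hp1 hp2 => h.2.2.2 p (Or.inl hp) hp1 hp2⟩

lemma immSucc_branch_up {ℓ a b : PreSeq κ} (hℓ : IsLeaf code.T ℓ)
    (h : ImmSucc (C ℓ).T a b) : ImmSucc (graftT code C) (appendSeq ℓ a) (appendSeq ℓ b) := by
  refine ⟨mem_graftT_branch code C hℓ h.1, appendSeq_le_appendSeq.2 h.2.1,
    fun he => h.2.2.1 (appendSeq_injective he), ?_⟩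
  intro p hp hap hpb
  have hlp : seqLE ℓ p := seqLE_trans (seqLE_leaf_append code hℓ a) hap
  obtain ⟨hps, hpe⟩ := mem_branch code C hp hℓ hlp
  rw [hpe] at hap hpb ⊢
  rcases h.2.2.2 (shiftSeq ℓ p) hps (appendSeq_le_appendSeq.1 hap)
      (appendSeq_le_appendSeq.1 hpb) with h' | h'
  · exact Or.inl (by rw [h'])
  · exact Or.inr (by rw [h'])

lemma immSucc_branch_down {ℓ a b : PreSeq κ} (hℓ : IsLeaf code.T ℓ) (hb : b ∈ (C ℓ).T)
    (h : ImmSucc (graftT code C) (appendSeq ℓ a) (appendSeq ℓ b)) : ImmSucc (C ℓ).T a b := by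
  refine ⟨hb, appendSeq_le_appendSeq.1 h.2.1, fun he => h.2.2.1 (by rw [he]), ?_⟩
  intro p hp hap hpb
  rcases h.2.2.2 (appendSeq ℓ p) (mem_graftT_branch code C hℓ hp)
      (appendSeq_le_appendSeq.2 hap) (appendSeq_le_appendSeq.2 hpb) with h' | h'
  · exact Or.inl (appendSeq_injective h')
  · exact Or.inr (appendSeq_injective h')

lemma succ_mem_T {f g : PreSeq κ} (hf : f ∈ code.T) (hnl : ¬ IsLeaf code.T f)
    (h : ImmSucc (graftT code C) f g) : g ∈ code.T := by
  rcases h.1 with hg | ⟨ℓ, hℓ, q, hq, rfl⟩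
  · exact hg
  · have hlf : seqLE ℓ (appendSeq ℓ q) := seqLE_leaf_append code hℓ q
    rcases initial_comparable (code.mem_isSeq f hf) (code.mem_isSeq ℓ hℓ.1) h.2.1 hlf
      with hfl | hlf'
    · rcases h.2.2.2 ℓ (Or.inl hℓ.1) hfl hlf with h' | h'
      · exact absurd (h' ▸ hℓ) hnl
      · exact h' ▸ hℓ.1
    · exact absurd ((hℓ.2 f hf hlf').symm ▸ hℓ) hnl

lemma seqSup_branch {ℓ : PreSeq κ} (hℓ : IsSeq κ ℓ) {c : Set (PreSeq κ)}
    (hc : IsChain seqLE c) {a₀ : PreSeq κ} (ha₀ : a₀ ∈ c) (hla : seqLE ℓ a₀) :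
    (∀ f ∈ {f ∈ c | seqLE ℓ f}, seqLE ℓ f) ∧ a₀ ∈ {f ∈ c | seqLE ℓ f} ∧
      IsChain seqLE (shiftSeq ℓ '' {f ∈ c | seqLE ℓ f}) ∧
      seqSup c = appendSeq ℓ (seqSup (shiftSeq ℓ '' {f ∈ c | seqLE ℓ f})) := by
  set c₂ := {f ∈ c | seqLE ℓ f} with hc₂
  have hc₂sub : c₂ ⊆ c := fun f hf => hf.1
  have hchain₂ : IsChain seqLE c₂ := hc.mono hc₂sub
  have hcof : ∀ f ∈ c, ∃ g ∈ c₂, seqLE f g := by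
    intro f hf
    by_cases hlf : seqLE ℓ f
    · exact ⟨f, ⟨hf, hlf⟩, seqLE_refl f⟩
    · rcases eq_or_ne f a₀ with rfl | hne
      · exact absurd hla hlf
      · rcases hc hf ha₀ hne with h | h
        · exact ⟨a₀, ⟨ha₀, hla⟩, h⟩
        · exact absurd (seqLE_trans hla h) hlf
  have hchain' : IsChain seqLE (shiftSeq ℓ '' c₂) := by
    rintro _ ⟨f, hf, rfl⟩ _ ⟨g, hg, rfl⟩ hne
    have hfg : f ≠ g := fun h => hne (by rw [h])
    rcases hchain₂ hf hg hfg with h | h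
    · exact Or.inl (shiftSeq_mono h)
    · exact Or.inr (shiftSeq_mono h)
  refine ⟨fun f hf => hf.2, ⟨ha₀, hla⟩, hchain', ?_⟩
  have h1 : seqSup c = seqSup c₂ := seqSup_eq_seqSup hc hc₂sub hcof
  have him : appendSeq ℓ '' (shiftSeq ℓ '' c₂) = c₂ := by
    ext f
    constructor
    · rintro ⟨_, ⟨g, hg, rfl⟩, rfl⟩
      rwa [appendSeq_shiftSeq hℓ hg.2]
    · intro hf
      exact ⟨shiftSeq ℓ f, ⟨f, hf, rfl⟩, appendSeq_shiftSeq hℓ hf.2⟩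
  have h2 := seqSup_appendSeq hℓ hchain' ⟨shiftSeq ℓ a₀, a₀, ⟨ha₀, hla⟩, rfl⟩
  rw [him] at h2
  rw [h1, ← h2]

end Graft

section GraftCode

variable {κ : Cardinal.{0}} {Z : Type*} {Basic Basic' : Set (Set Z)}
variable (code : BorelStarCode κ Z Basic') (C : PreSeq κ → BorelStarCode κ Z Basic)

/-- The grafted `Borel*`-code. -/
noncomputable def graft (hκ : ℵ₀ < κ) : BorelStarCode κ Z Basic where
  T := graftT code C
  h := grafth code C
  mem_isSeq := by
    rintro f (hf | ⟨ℓ, hℓ, g, hg, rfl⟩)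
    · exact code.mem_isSeq f hf
    · exact isSeq_appendSeq hκ.le (code.mem_isSeq ℓ hℓ.1) ((C ℓ).mem_isSeq g hg)
  root_mem := Or.inl code.root_mem
  downward := by
    rintro f (hf | ⟨ℓ, hℓ, q, hq, rfl⟩) g hgseq hgf
    · exact Or.inl (code.downward f hf g hgseq hgf)
    · have hℓseq := code.mem_isSeq ℓ hℓ.1
      rcases initial_comparable hgseq hℓseq hgf (seqLE_leaf_append code hℓ q) with hgl | hlg
      · exact Or.inl (code.downward ℓ hℓ.1 g hgseq hgl)
      · have hsh : seqLE (shiftSeq ℓ g) q := by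
          have := shiftSeq_mono (ℓ := ℓ) hgf
          rwa [shiftSeq_appendSeq] at this
        have hmem : shiftSeq ℓ g ∈ (C ℓ).T :=
          (C ℓ).downward q hq _ (isSeq_shiftSeq hgseq) hsh
        exact Or.inr ⟨ℓ, hℓ, _, hmem, (appendSeq_shiftSeq hℓseq hlg).symm⟩
  card_le := by
    have hL : Cardinal.mk ↥{ℓ : PreSeq κ | IsLeaf code.T ℓ} ≤ Cardinal.lift.{1} κ :=
      le_trans (Cardinal.mk_le_mk_of_subset fun ℓ hℓ => hℓ.1) code.card_le
    have haleph : ℵ₀ ≤ Cardinal.lift.{1} κ := Cardinal.aleph0_le_lift.2 hκ.le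
    have hS : {f : PreSeq κ | ∃ ℓ, IsLeaf code.T ℓ ∧ ∃ g ∈ (C ℓ).T, f = appendSeq ℓ g} =
        ⋃ ℓ : {ℓ : PreSeq κ | IsLeaf code.T ℓ}, appendSeq ℓ '' (C ↑ℓ).T := by
      ext f
      simp only [Set.mem_setOf_eq, Set.mem_iUnion, Set.mem_image]
      constructor
      · rintro ⟨ℓ, hℓ, g, hg, rfl⟩
        exact ⟨⟨ℓ, hℓ⟩, g, hg, rfl⟩
      · rintro ⟨⟨ℓ, hℓ⟩, g, hg, rfl⟩
        exact ⟨ℓ, hℓ, g, hg, rfl⟩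
    calc Cardinal.mk ↥(graftT code C)
        ≤ Cardinal.mk ↥code.T +
          Cardinal.mk ↥{f : PreSeq κ | ∃ ℓ, IsLeaf code.T ℓ ∧ ∃ g ∈ (C ℓ).T, f = appendSeq ℓ g} :=
          Cardinal.mk_union_le _ _
      _ ≤ Cardinal.lift.{1} κ + Cardinal.lift.{1} κ := by
          refine add_le_add code.card_le ?_
          rw [hS]
          calc Cardinal.mk ↥(⋃ ℓ : {ℓ : PreSeq κ | IsLeaf code.T ℓ}, appendSeq ↑ℓ '' (C ↑ℓ).T)
              ≤ Cardinal.sum fun ℓ : {ℓ : PreSeq κ | IsLeaf code.T ℓ} =>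
                  Cardinal.mk ↥(appendSeq ↑ℓ '' (C ↑ℓ).T) := Cardinal.mk_iUnion_le_sum_mk
            _ ≤ Cardinal.sum fun _ : {ℓ : PreSeq κ | IsLeaf code.T ℓ} => Cardinal.lift.{1} κ :=
                Cardinal.sum_le_sum _ _ fun ℓ =>
                  le_trans Cardinal.mk_image_le ((C ↑ℓ).card_le)
            _ = Cardinal.mk ↥{ℓ : PreSeq κ | IsLeaf code.T ℓ} * Cardinal.lift.{1} κ :=
                Cardinal.sum_const' _ _
            _ ≤ Cardinal.lift.{1} κ * Cardinal.lift.{1} κ := by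
                exact mul_le_mul_left hL _
            _ = Cardinal.lift.{1} κ := Cardinal.mul_eq_self haleph
      _ = Cardinal.lift.{1} κ := Cardinal.add_eq_self haleph
  no_long_chain := by
    intro c hc hchain
    have haleph : ℵ₀ ≤ Cardinal.lift.{1} κ := Cardinal.aleph0_le_lift.2 hκ.le
    have hsplit : c = (c ∩ code.T) ∪ (c \ code.T) := (Set.inter_union_diff c code.T).symm
    have h1 : Cardinal.mk ↥(c ∩ code.T) < Cardinal.lift.{1} κ :=
      code.no_long_chain _ Set.inter_subset_right (hchain.mono Set.inter_subset_left)
    have h2 : Cardinal.mk ↥(c \ code.T) < Cardinal.lift.{1} κ := by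
      rcases Set.eq_empty_or_nonempty (c \ code.T) with he | ⟨a₀, ha₀⟩
      · rw [he]
        simpa using lt_of_lt_of_le Cardinal.aleph0_pos haleph
      · obtain ⟨ℓ, hℓ, q, hq, ha⟩ : ∃ ℓ, IsLeaf code.T ℓ ∧ ∃ g ∈ (C ℓ).T, a₀ = appendSeq ℓ g := by
          rcases hc ha₀.1 with h | h
          · exact absurd h ha₀.2
          · exact h
        have hla₀ : seqLE ℓ a₀ := ha ▸ seqLE_leaf_append code hℓ q
        have key : ∀ f ∈ c \ code.T, seqLE ℓ f := by
          rintro f ⟨hf, hfT⟩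
          obtain ⟨ℓ', hℓ', q', hq', hf'⟩ : ∃ ℓ', IsLeaf code.T ℓ' ∧
              ∃ g ∈ (C ℓ').T, f = appendSeq ℓ' g := by
            rcases hc hf with h | h
            · exact absurd h hfT
            · exact h
          have hlf' : seqLE ℓ' f := hf' ▸ seqLE_leaf_append code hℓ' q'
          rcases eq_or_ne f a₀ with rfl | hne
          · exact hla₀
          · rcases hchain hf ha₀.1 hne with h | h
            · have : ℓ' = ℓ := leaf_unique code.mem_isSeq hℓ' hℓ
                (seqLE_trans hlf' h) hla₀
              exact this ▸ hlf'
            · have : ℓ = ℓ' := leaf_unique code.mem_isSeq hℓ hℓ'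
                (seqLE_trans hla₀ h) hlf'
              exact this ▸ hlf'
        have hd : shiftSeq ℓ '' (c \ code.T) ⊆ (C ℓ).T := by
          rintro _ ⟨f, hf, rfl⟩
          exact (mem_branch code C (hc hf.1) hℓ (key f hf)).1
        have hdchain : IsChain seqLE (shiftSeq ℓ '' (c \ code.T)) := by
          rintro _ ⟨f, hf, rfl⟩ _ ⟨g, hg, rfl⟩ hne
          have hfg : f ≠ g := fun h => hne (by rw [h])
          rcases hchain hf.1 hg.1 hfg with h | h
          · exact Or.inl (shiftSeq_mono h)
          · exact Or.inr (shiftSeq_mono h)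
        have hdlt := (C ℓ).no_long_chain _ hd hdchain
        have hsub : c \ code.T ⊆ appendSeq ℓ '' (shiftSeq ℓ '' (c \ code.T)) := by
          intro f hf
          exact ⟨shiftSeq ℓ f, ⟨f, hf, rfl⟩,
            appendSeq_shiftSeq (code.mem_isSeq ℓ hℓ.1) (key f hf)⟩
        calc Cardinal.mk ↥(c \ code.T)
            ≤ Cardinal.mk ↥(appendSeq ℓ '' (shiftSeq ℓ '' (c \ code.T))) :=
              Cardinal.mk_le_mk_of_subset hsub
          _ ≤ Cardinal.mk ↥(shiftSeq ℓ '' (c \ code.T)) := Cardinal.mk_image_le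
          _ < Cardinal.lift.{1} κ := hdlt
    calc Cardinal.mk ↥c = Cardinal.mk ↥((c ∩ code.T) ∪ (c \ code.T)) := by rw [← hsplit]
      _ ≤ Cardinal.mk ↥(c ∩ code.T) + Cardinal.mk ↥(c \ code.T) := Cardinal.mk_union_le _ _
      _ < Cardinal.lift.{1} κ := Cardinal.add_lt_of_lt haleph h1 h2
  chain_sup := by
    intro c hc hne hchain
    by_cases hT : c ⊆ code.T
    · exact Or.inl (code.chain_sup c hT hne hchain)
    · obtain ⟨a₀, ha₀c, ha₀T⟩ : ∃ a₀ ∈ c, a₀ ∉ code.T := by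
        rcases Set.not_subset.1 hT with ⟨a₀, h1, h2⟩
        exact ⟨a₀, h1, h2⟩
      obtain ⟨ℓ, hℓ, q, hq, ha⟩ : ∃ ℓ, IsLeaf code.T ℓ ∧ ∃ g ∈ (C ℓ).T, a₀ = appendSeq ℓ g := by
        rcases hc ha₀c with h | h
        · exact absurd h ha₀T
        · exact h
      have hℓseq := code.mem_isSeq ℓ hℓ.1
      have hla₀ : seqLE ℓ a₀ := ha ▸ seqLE_leaf_append code hℓ q
      obtain ⟨hall, ha₀₂, hchain', hsup⟩ := seqSup_branch hℓseq hchain ha₀c hla₀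
      rw [hsup]
      have hd : shiftSeq ℓ '' {f ∈ c | seqLE ℓ f} ⊆ (C ℓ).T := by
        rintro _ ⟨f, hf, rfl⟩
        exact (mem_branch code C (hc hf.1) hℓ hf.2).1
      have := (C ℓ).chain_sup _ hd ⟨shiftSeq ℓ a₀, a₀, ha₀₂, rfl⟩ hchain'
      exact mem_graftT_branch code C hℓ this
  label_leaf := by
    intro f hf hleaf
    obtain ⟨ℓ, hℓ, hle⟩ : ∃ ℓ, IsLeaf code.T ℓ ∧ seqLE ℓ f := by
      rcases hf with hf' | ⟨ℓ, hℓ, q, hq, rfl⟩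
      · refine ⟨f, ⟨hf', fun g hg hfg => hleaf.2 g (Or.inl hg) hfg⟩, seqLE_refl f⟩
      · exact ⟨ℓ, hℓ, seqLE_leaf_append code hℓ q⟩
    obtain ⟨hsh, hfe⟩ := mem_branch code C hf hℓ hle
    have hinner : IsLeaf (C ℓ).T (shiftSeq ℓ f) := by
      refine ⟨hsh, fun g hg hgle => ?_⟩
      have h1 : seqLE f (appendSeq ℓ g) := by
        rw [hfe]
        exact appendSeq_le_appendSeq.2 hgle
      have h2 : appendSeq ℓ g = f := hleaf.2 _ (mem_graftT_branch code C hℓ hg) h1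
      rw [hfe] at h2
      exact appendSeq_injective h2
    obtain ⟨s, hs, hlbl⟩ := (C ℓ).label_leaf _ hsh hinner
    exact ⟨s, hs, by rw [grafth_eq code C hℓ hle]; exact hlbl⟩
  label_node := by
    intro f hf hnl
    by_cases hlb : ∃ ℓ, IsLeaf code.T ℓ ∧ seqLE ℓ f
    · obtain ⟨ℓ, hℓ, hle⟩ := hlb
      obtain ⟨hsh, hfe⟩ := mem_branch code C hf hℓ hle
      have hinner : ¬ IsLeaf (C ℓ).T (shiftSeq ℓ f) := by
        intro hinner
        refine hnl ⟨hf, fun g hg hfg => ?_⟩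
        have hlg : seqLE ℓ g := seqLE_trans hle hfg
        obtain ⟨hgs, hge⟩ := mem_branch code C hg hℓ hlg
        have : shiftSeq ℓ g = shiftSeq ℓ f := hinner.2 _ hgs (shiftSeq_mono hfg)
        rw [hge, this, ← hfe]
      rw [grafth_eq code C hℓ hle]
      exact (C ℓ).label_node _ hsh hinner
    · have hfT : f ∈ code.T := by
        rcases hf with hf' | ⟨ℓ, hℓ, q, hq, rfl⟩
        · exact hf'
        · exact absurd ⟨ℓ, hℓ, seqLE_leaf_append code hℓ q⟩ hlb
      rw [grafth_eq' code C hlb]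
      exact code.label_node f hfT fun hfl => hlb (⟨f, hfl, seqLE_refl f⟩)

end GraftCode

section GraftWin

variable {κ : Cardinal.{0}} {Z : Type*} {Basic Basic' : Set (Set Z)}
variable (code : BorelStarCode κ Z Basic') (C : PreSeq κ → BorelStarCode κ Z Basic)

lemma not_leaf_inter {cd : BorelStarCode κ Z Basic'} {f : PreSeq κ} (hf : f ∈ cd.T)
    (h : cd.h f = BLabel.inter) : ¬ IsLeaf cd.T f := fun hl => by
  obtain ⟨s, _, hs⟩ := cd.label_leaf f hf hl
  rw [h] at hs
  cases hs

lemma not_leaf_union {cd : BorelStarCode κ Z Basic'} {f : PreSeq κ} (hf : f ∈ cd.T)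
    (h : cd.h f = BLabel.union) : ¬ IsLeaf cd.T f := fun hl => by
  obtain ⟨s, _, hs⟩ := cd.label_leaf f hf hl
  rw [h] at hs
  cases hs

lemma grafth_eq_of_not_leaf {f : PreSeq κ} (hf : f ∈ code.T) (hnl : ¬ IsLeaf code.T f) :
    grafth code C f = code.h f :=
  grafth_eq' code C fun h => hnl ((leafBelow_iff code hf).1 h)

variable (hκ : ℵ₀ < κ)

lemma graft_wins_to
    (HC : ∀ ℓ, IsLeaf code.T ℓ → ∀ s, code.h ℓ = BLabel.leaf s →
      {x | IIWinsBStar (C ℓ) x} = s)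
    {x : Z} (h : IIWinsBStar (graft code C hκ) x) : IIWinsBStar code x := by
  obtain ⟨σ', h1', h2'⟩ := h
  -- outer reachable positions are graft-reachable and in `code.T`
  have outer : ∀ f, Reach code σ' f → Reach (graft code C hκ) σ' f ∧ f ∈ code.T := by
    intro f hr
    induction hr with
    | root => exact ⟨Reach.root, code.root_mem⟩
    | inter f g hf hlbl hsucc ih =>
        have hnl : ¬ IsLeaf code.T f := not_leaf_inter ih.2 hlbl
        have hlbl' : (graft code C hκ).h f = BLabel.inter := by
          show grafth code C f = BLabel.inter
          rw [grafth_eq_of_not_leaf code C ih.2 hnl, hlbl]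
        exact ⟨Reach.inter f g ih.1 hlbl' (immSucc_lift code C hsucc.1 hsucc), hsucc.1⟩
    | union f hf hlbl ih =>
        have hnl : ¬ IsLeaf code.T f := not_leaf_union ih.2 hlbl
        have hlbl' : (graft code C hκ).h f = BLabel.union := by
          show grafth code C f = BLabel.union
          rw [grafth_eq_of_not_leaf code C ih.2 hnl, hlbl]
        have hstep : Reach (graft code C hκ) σ' (σ' f) := Reach.union f ih.1 hlbl'
        have himm := h1' f ih.1 hlbl'
        exact ⟨hstep, succ_mem_T code C ih.2 hnl himm⟩
    | lim c hne hchain hall ih =>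
        exact ⟨Reach.lim c hne hchain fun f hf => (ih f hf).1,
          code.chain_sup c (fun f hf => (ih f hf).2) hne hchain⟩
  -- at a reachable leaf `ℓ`, player II wins the inner game
  have inner : ∀ ℓ, IsLeaf code.T ℓ → Reach code σ' ℓ → IIWinsBStar (C ℓ) x := by
    intro ℓ hℓ hrℓ
    have hℓseq := code.mem_isSeq ℓ hℓ.1
    have hgr : Reach (graft code C hκ) σ' ℓ := (outer ℓ hrℓ).1
    have key : ∀ g, Reach (C ℓ) (fun g => shiftSeq ℓ (σ' (appendSeq ℓ g))) g →
        Reach (graft code C hκ) σ' (appendSeq ℓ g) ∧ g ∈ (C ℓ).T := by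
      intro g hg
      induction hg with
      | root => rw [appendSeq_seqRoot hℓseq]; exact ⟨hgr, (C ℓ).root_mem⟩
      | inter g g' hg hlbl hsucc ih =>
          have hlbl' : (graft code C hκ).h (appendSeq ℓ g) = BLabel.inter := by
            show grafth code C (appendSeq ℓ g) = BLabel.inter
            rw [grafth_eq code C hℓ (seqLE_leaf_append code hℓ g), shiftSeq_appendSeq]
            exact hlbl
          exact ⟨Reach.inter _ _ ih.1 hlbl' (immSucc_branch_up code C hℓ hsucc), hsucc.1⟩
      | union g hg hlbl ih =>
          have hlbl' : (graft code C hκ).h (appendSeq ℓ g) = BLabel.union := by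
            show grafth code C (appendSeq ℓ g) = BLabel.union
            rw [grafth_eq code C hℓ (seqLE_leaf_append code hℓ g), shiftSeq_appendSeq]
            exact hlbl
          have hstep : Reach (graft code C hκ) σ' (σ' (appendSeq ℓ g)) :=
            Reach.union _ ih.1 hlbl'
          have himm := h1' _ ih.1 hlbl'
          have hlσ : seqLE ℓ (σ' (appendSeq ℓ g)) :=
            seqLE_trans (seqLE_leaf_append code hℓ g) himm.2.1
          obtain ⟨hshm, hshe⟩ := mem_branch code C himm.1 hℓ hlσ
          rw [← hshe]
          exact ⟨hstep, hshm⟩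
      | lim d hne hchain hall ih =>
          have hchain' : IsChain seqLE (appendSeq ℓ '' d) := by
            rintro _ ⟨f, hf, rfl⟩ _ ⟨g, hg, rfl⟩ hne'
            have hfg : f ≠ g := fun h => hne' (by rw [h])
            rcases hchain hf hg hfg with h | h
            · exact Or.inl (appendSeq_le_appendSeq.2 h)
            · exact Or.inr (appendSeq_le_appendSeq.2 h)
          have hr : Reach (graft code C hκ) σ' (seqSup (appendSeq ℓ '' d)) := by
            refine Reach.lim _ (hne.image _) hchain' ?_
            rintro _ ⟨f, hf, rfl⟩
            exact (ih f hf).1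
          rw [seqSup_appendSeq hℓseq hchain hne] at hr
          exact ⟨hr, (C ℓ).chain_sup d (fun g hg => (ih g hg).2) hne hchain⟩
    refine ⟨fun g => shiftSeq ℓ (σ' (appendSeq ℓ g)), ?_, ?_⟩
    · intro g hg hlbl
      have hlbl' : (graft code C hκ).h (appendSeq ℓ g) = BLabel.union := by
        show grafth code C (appendSeq ℓ g) = BLabel.union
        rw [grafth_eq code C hℓ (seqLE_leaf_append code hℓ g), shiftSeq_appendSeq]
        exact hlbl
      have himm := h1' _ (key g hg).1 hlbl'
      have hlσ : seqLE ℓ (σ' (appendSeq ℓ g)) :=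
        seqLE_trans (seqLE_leaf_append code hℓ g) himm.2.1
      obtain ⟨hshm, hshe⟩ := mem_branch code C himm.1 hℓ hlσ
      rw [hshe] at himm
      exact immSucc_branch_down code C hℓ hshm himm
    · intro g s hg hlbl
      have hlbl' : (graft code C hκ).h (appendSeq ℓ g) = BLabel.leaf s := by
        show grafth code C (appendSeq ℓ g) = BLabel.leaf s
        rw [grafth_eq code C hℓ (seqLE_leaf_append code hℓ g), shiftSeq_appendSeq]
        exact hlbl
      exact h2' _ s (key g hg).1 hlbl'
  refine ⟨σ', ?_, ?_⟩
  · intro f hr hlbl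
    obtain ⟨hg, hfT⟩ := outer f hr
    have hnl : ¬ IsLeaf code.T f := not_leaf_union hfT hlbl
    have hlbl' : (graft code C hκ).h f = BLabel.union := by
      show grafth code C f = BLabel.union
      rw [grafth_eq_of_not_leaf code C hfT hnl, hlbl]
    have himm := h1' f hg hlbl'
    exact immSucc_restrict code C (succ_mem_T code C hfT hnl himm) himm
  · intro f s hr hlbl
    obtain ⟨hg, hfT⟩ := outer f hr
    have hfl : IsLeaf code.T f := by
      by_contra hnl
      rcases code.label_node f hfT hnl with h | h <;> rw [hlbl] at h <;> cases h
    have hwin := inner f hfl hr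
    have := HC f hfl s hlbl
    rw [← this]
    exact hwin

end GraftWin

section GraftWin2

variable {κ : Cardinal.{0}} {Z : Type*} {Basic Basic' : Set (Set Z)}
variable (code : BorelStarCode κ Z Basic') (C : PreSeq κ → BorelStarCode κ Z Basic)

/-- A winning strategy for the inner game at `ℓ` (when one exists). -/
noncomputable def innerStrat (x : Z) (ℓ : PreSeq κ) : PreSeq κ → PreSeq κ :=
  open scoped Classical in
  if h : IIWinsBStar (C ℓ) x then h.choose else id

lemma innerStrat_spec {x : Z} {ℓ : PreSeq κ} (h : IIWinsBStar (C ℓ) x) :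
    (∀ f, Reach (C ℓ) (innerStrat C x ℓ) f → (C ℓ).h f = BLabel.union →
      ImmSucc (C ℓ).T f (innerStrat C x ℓ f)) ∧
    (∀ f s, Reach (C ℓ) (innerStrat C x ℓ) f → (C ℓ).h f = BLabel.leaf s → x ∈ s) := by
  rw [innerStrat, dif_pos h]
  exact h.choose_spec

/-- The strategy for the grafted game: follow `σ` until a leaf of `code.T` is passed,
then switch to a winning strategy of the inner game. -/
noncomputable def graftStrat (x : Z) (σ : PreSeq κ → PreSeq κ) : PreSeq κ → PreSeq κ :=
  open scoped Classical in
  fun f =>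
    if h : ∃ ℓ, IsLeaf code.T ℓ ∧ seqLE ℓ f then
      appendSeq h.choose (innerStrat C x h.choose (shiftSeq h.choose f))
    else σ f

lemma graftStrat_eq {x : Z} {σ : PreSeq κ → PreSeq κ} {ℓ f : PreSeq κ}
    (hℓ : IsLeaf code.T ℓ) (hle : seqLE ℓ f) :
    graftStrat code C x σ f = appendSeq ℓ (innerStrat C x ℓ (shiftSeq ℓ f)) := by
  have h : ∃ ℓ, IsLeaf code.T ℓ ∧ seqLE ℓ f := ⟨ℓ, hℓ, hle⟩
  rw [graftStrat, dif_pos h]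
  obtain ⟨h1, h2⟩ := h.choose_spec
  rw [leaf_unique code.mem_isSeq h1 hℓ h2 hle]

lemma graftStrat_eq' {x : Z} {σ : PreSeq κ → PreSeq κ} {f : PreSeq κ}
    (h : ¬ ∃ ℓ, IsLeaf code.T ℓ ∧ seqLE ℓ f) : graftStrat code C x σ f = σ f := dif_neg h

variable (hκ : ℵ₀ < κ)

lemma graft_wins_from
    (HC : ∀ ℓ, IsLeaf code.T ℓ → ∀ s, code.h ℓ = BLabel.leaf s →
      {x | IIWinsBStar (C ℓ) x} = s)
    {x : Z} (h : IIWinsBStar code x) : IIWinsBStar (graft code C hκ) x := by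
  obtain ⟨σ, h1, h2⟩ := h
  set σ' := graftStrat code C x σ with hσ'
  -- at a reachable leaf, II wins the inner game
  have innerW : ∀ ℓ, IsLeaf code.T ℓ → Reach code σ ℓ → IIWinsBStar (C ℓ) x := by
    intro ℓ hℓ hr
    obtain ⟨s, _, hs⟩ := code.label_leaf ℓ hℓ.1 hℓ
    have hx : x ∈ s := h2 ℓ s hr hs
    rw [← HC ℓ hℓ s hs] at hx
    exact hx
  -- the invariant describing graft-reachable positions
  have caseT : ∀ g, g ∈ code.T → Reach code σ g →
      (g ∈ code.T ∧ Reach code σ g ∧ ¬ IsLeaf code.T g) ∨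
      (∃ ℓ, IsLeaf code.T ℓ ∧ Reach code σ ℓ ∧ seqLE ℓ g ∧ shiftSeq ℓ g ∈ (C ℓ).T ∧
        Reach (C ℓ) (innerStrat C x ℓ) (shiftSeq ℓ g) ∧ g = appendSeq ℓ (shiftSeq ℓ g)) := by
    intro g hg hr
    by_cases hl : IsLeaf code.T g
    · have hgseq := code.mem_isSeq g hg
      refine Or.inr ⟨g, hl, hr, seqLE_refl g, ?_, ?_, ?_⟩
      · rw [shiftSeq_self hgseq]; exact (C g).root_mem
      · rw [shiftSeq_self hgseq]; exact Reach.root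
      · rw [shiftSeq_self hgseq, appendSeq_seqRoot hgseq]
    · exact Or.inl ⟨hg, hr, hl⟩
  have inv : ∀ f, Reach (graft code C hκ) σ' f →
      (f ∈ code.T ∧ Reach code σ f ∧ ¬ IsLeaf code.T f) ∨
      (∃ ℓ, IsLeaf code.T ℓ ∧ Reach code σ ℓ ∧ seqLE ℓ f ∧ shiftSeq ℓ f ∈ (C ℓ).T ∧
        Reach (C ℓ) (innerStrat C x ℓ) (shiftSeq ℓ f) ∧ f = appendSeq ℓ (shiftSeq ℓ f)) := by
    intro f hr
    induction hr with
    | root => exact caseT _ code.root_mem Reach.root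
    | inter f g hf hlbl hsucc ih =>
        rcases ih with ⟨hfT, hfr, hfnl⟩ | ⟨ℓ, hℓ, hrℓ, hle, hsh, hir, hfe⟩
        · have hlbl2 : code.h f = BLabel.inter := by
            rw [← grafth_eq_of_not_leaf code C hfT hfnl]
            exact hlbl
          have hgT : g ∈ code.T := succ_mem_T code C hfT hfnl hsucc
          exact caseT g hgT
            (Reach.inter f g hfr hlbl2 (immSucc_restrict code C hgT hsucc))
        · have hlbl2 : (C ℓ).h (shiftSeq ℓ f) = BLabel.inter := by
            rw [← grafth_eq code C hℓ hle]
            exact hlbl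
          have hlg : seqLE ℓ g := seqLE_trans hle hsucc.2.1
          obtain ⟨hgs, hge⟩ := mem_branch code C hsucc.1 hℓ hlg
          have hsucc' : ImmSucc (C ℓ).T (shiftSeq ℓ f) (shiftSeq ℓ g) := by
            refine immSucc_branch_down code C hℓ hgs ?_
            rw [← hfe, ← hge]
            exact hsucc
          exact Or.inr ⟨ℓ, hℓ, hrℓ, hlg, hgs,
            Reach.inter _ _ hir hlbl2 hsucc', hge⟩
    | union f hf hlbl ih =>
        rcases ih with ⟨hfT, hfr, hfnl⟩ | ⟨ℓ, hℓ, hrℓ, hle, hsh, hir, hfe⟩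
        · have hlbl2 : code.h f = BLabel.union := by
            rw [← grafth_eq_of_not_leaf code C hfT hfnl]
            exact hlbl
          have hσeq : σ' f = σ f :=
            graftStrat_eq' code C fun hh => hfnl ((leafBelow_iff code hfT).1 hh)
          have hstep : Reach code σ (σ f) := Reach.union f hfr hlbl2
          have himm := h1 f hfr hlbl2
          rw [hσeq]
          exact caseT _ himm.1 hstep
        · have hlbl2 : (C ℓ).h (shiftSeq ℓ f) = BLabel.union := by
            rw [← grafth_eq code C hℓ hle]
            exact hlbl
          have hwin := innerW ℓ hℓ hrℓ
          obtain ⟨hw1, hw2⟩ := innerStrat_spec C hwin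
          have hstep : Reach (C ℓ) (innerStrat C x ℓ) (innerStrat C x ℓ (shiftSeq ℓ f)) :=
            Reach.union _ hir hlbl2
          have himm := hw1 _ hir hlbl2
          have hσeq : σ' f = appendSeq ℓ (innerStrat C x ℓ (shiftSeq ℓ f)) :=
            graftStrat_eq code C hℓ hle
          rw [hσeq]
          refine Or.inr ⟨ℓ, hℓ, hrℓ, seqLE_leaf_append code hℓ _, ?_, ?_, ?_⟩
          · rw [shiftSeq_appendSeq]; exact himm.1
          · rw [shiftSeq_appendSeq]; exact hstep
          · rw [shiftSeq_appendSeq]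
    | lim c hne hchain hall ih =>
        by_cases hB : ∃ a₀ ∈ c, ∃ ℓ, IsLeaf code.T ℓ ∧ seqLE ℓ a₀
        · obtain ⟨a₀, ha₀, ℓ, hℓ, hla₀⟩ := hB
          have hℓseq := code.mem_isSeq ℓ hℓ.1
          have hrℓ : Reach code σ ℓ := by
            rcases ih a₀ ha₀ with ⟨ha₀T, _, hnl⟩ | ⟨ℓ', hℓ', hrℓ', hle', _, _, _⟩
            · exact absurd ((hℓ.2 a₀ ha₀T hla₀).symm ▸ hℓ) hnl
            · rwa [leaf_unique code.mem_isSeq hℓ hℓ' hla₀ hle']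
          obtain ⟨hall2, ha₀₂, hchain', hsup⟩ := seqSup_branch hℓseq hchain ha₀ hla₀
          have hdprop : ∀ g ∈ shiftSeq ℓ '' {f ∈ c | seqLE ℓ f},
              g ∈ (C ℓ).T ∧ Reach (C ℓ) (innerStrat C x ℓ) g := by
            rintro _ ⟨f, hf, rfl⟩
            rcases ih f hf.1 with ⟨hfT, _, hnl⟩ | ⟨ℓ', hℓ', _, hle', hsh', hir', hfe'⟩
            · exact absurd ((hℓ.2 f hfT hf.2).symm ▸ hℓ) hnl
            · have : ℓ' = ℓ := leaf_unique code.mem_isSeq hℓ' hℓ hle' hf.2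
              subst this
              exact ⟨hsh', hir'⟩
          have hdsub : shiftSeq ℓ '' {f ∈ c | seqLE ℓ f} ⊆ (C ℓ).T :=
            fun g hg => (hdprop g hg).1
          have hdne : (shiftSeq ℓ '' {f ∈ c | seqLE ℓ f}).Nonempty :=
            ⟨shiftSeq ℓ a₀, a₀, ha₀₂, rfl⟩
          have hdr : Reach (C ℓ) (innerStrat C x ℓ)
              (seqSup (shiftSeq ℓ '' {f ∈ c | seqLE ℓ f})) :=
            Reach.lim _ hdne hchain' fun g hg => (hdprop g hg).2
          have hdm := (C ℓ).chain_sup _ hdsub hdne hchain'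
          rw [hsup]
          refine Or.inr ⟨ℓ, hℓ, hrℓ, seqLE_leaf_append code hℓ _, ?_, ?_, ?_⟩
          · rw [shiftSeq_appendSeq]; exact hdm
          · rw [shiftSeq_appendSeq]; exact hdr
          · rw [shiftSeq_appendSeq]
        · have hcT : ∀ f ∈ c, f ∈ code.T ∧ Reach code σ f := by
            intro f hf
            rcases ih f hf with ⟨hfT, hfr, _⟩ | ⟨ℓ, hℓ, _, hle, _, _, _⟩
            · exact ⟨hfT, hfr⟩
            · exact absurd ⟨f, hf, ℓ, hℓ, hle⟩ hB
          exact caseT _ (code.chain_sup c (fun f hf => (hcT f hf).1) hne hchain)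
            (Reach.lim c hne hchain fun f hf => (hcT f hf).2)
  -- now verify that `σ'` is winning in the grafted game
  refine ⟨σ', ?_, ?_⟩
  · intro f hr hlbl
    rcases inv f hr with ⟨hfT, hfr, hfnl⟩ | ⟨ℓ, hℓ, hrℓ, hle, hsh, hir, hfe⟩
    · have hlbl2 : code.h f = BLabel.union := by
        rw [← grafth_eq_of_not_leaf code C hfT hfnl]
        exact hlbl
      have himm := h1 f hfr hlbl2
      have hσeq : σ' f = σ f :=
        graftStrat_eq' code C fun hh => hfnl ((leafBelow_iff code hfT).1 hh)
      rw [hσeq]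
      exact immSucc_lift code C himm.1 himm
    · have hlbl2 : (C ℓ).h (shiftSeq ℓ f) = BLabel.union := by
        rw [← grafth_eq code C hℓ hle]
        exact hlbl
      obtain ⟨hw1, hw2⟩ := innerStrat_spec C (innerW ℓ hℓ hrℓ)
      have himm := hw1 _ hir hlbl2
      have hσeq : σ' f = appendSeq ℓ (innerStrat C x ℓ (shiftSeq ℓ f)) :=
        graftStrat_eq code C hℓ hle
      rw [hσeq]
      have := immSucc_branch_up code C hℓ himm
      rw [← hfe] at this
      exact this
  · intro f s hr hlbl
    rcases inv f hr with ⟨hfT, hfr, hfnl⟩ | ⟨ℓ, hℓ, hrℓ, hle, hsh, hir, hfe⟩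
    · have hlbl2 : code.h f = BLabel.leaf s := by
        rw [← grafth_eq_of_not_leaf code C hfT hfnl]
        exact hlbl
      rcases code.label_node f hfT hfnl with hh | hh <;> rw [hlbl2] at hh <;>
        cases hh
    · have hlbl2 : (C ℓ).h (shiftSeq ℓ f) = BLabel.leaf s := by
        rw [← grafth_eq code C hℓ hle]
        exact hlbl
      obtain ⟨hw1, hw2⟩ := innerStrat_spec C (innerW ℓ hℓ hrℓ)
      exact hw2 _ s hir hlbl2

end GraftWin2

section GraftMain

variable {κ : Cardinal.{0}} {Z : Type*} {Basic Basic' : Set (Set Z)}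

/-- The main grafting lemma: if every leaf label of a code is `Borel*`, then the
winning set of the code is `Borel*`. -/
lemma isBorelStar_graft (hκ : ℵ₀ < κ) (code : BorelStarCode κ Z Basic')
    (hdef : Nonempty (BorelStarCode κ Z Basic))
    (H : ∀ f, IsLeaf code.T f → ∀ s, code.h f = BLabel.leaf s → IsBorelStar κ Basic s) :
    IsBorelStar κ Basic {x | IIWinsBStar code x} := by
  have hC : ∀ ℓ : PreSeq κ, ∃ c : BorelStarCode κ Z Basic,
      IsLeaf code.T ℓ → ∀ s, code.h ℓ = BLabel.leaf s → {x | IIWinsBStar c x} = s := by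
    intro ℓ
    by_cases hℓ : IsLeaf code.T ℓ ∧ ∃ s, code.h ℓ = BLabel.leaf s
    · obtain ⟨hℓ', s, hs⟩ := hℓ
      obtain ⟨c, hc⟩ := H ℓ hℓ' s hs
      refine ⟨c, fun _ s' hs' => ?_⟩
      rw [hs] at hs'
      injection hs' with h'
      rw [← h']
      exact hc.symm
    · exact ⟨hdef.some, fun hℓ' s hs => absurd ⟨hℓ', s, hs⟩ hℓ⟩
  choose C HC using hC
  exact ⟨graft code C hκ, Set.ext fun x =>
    ⟨fun hx => graft_wins_from code C hκ (fun ℓ hℓ => HC ℓ hℓ) hx,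
     fun hx => graft_wins_to code C hκ (fun ℓ hℓ => HC ℓ hℓ) hx⟩⟩

end GraftMain

/-! ### Two-level codes: unions and intersections -/

section TwoLevel

variable {κ : Cardinal.{0}} {Z : Type*}

/-- The length-one sequence with value `a`. -/
def single (a : O κ) : PreSeq κ :=
  open scoped Classical in fun γ => if γ = 0 then some a else none

lemma single_zero (a : O κ) : single a 0 = some a := if_pos rfl

lemma isSeq_single (hκ : ℵ₀ < κ) (a : O κ) : IsSeq κ (single a) := by
  refine ⟨1, ?_, fun γ => ?_⟩
  · rw [← Cardinal.ord_one]
    exact Cardinal.ord_lt_ord.2 (lt_trans Cardinal.one_lt_aleph0 hκ)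
  · rw [Ordinal.lt_one_iff_zero, single]
    split <;> simp_all

lemma single_ne_root (a : O κ) : single a ≠ seqRoot κ := by
  intro h
  have := congrFun h 0
  rw [single_zero] at this
  cases this

lemma single_le_single {a b : O κ} (h : seqLE (single a) (single b)) : a = b := by
  have := h 0 a (single_zero a)
  rw [single_zero] at this
  exact (some_eq_some_symm this).symm

lemma le_single {f : PreSeq κ} {a : O κ} (h : seqLE f (single a)) :
    f = seqRoot κ ∨ f = single a := by
  cases hf0 : f 0 with
  | none =>
      left
      funext γ
      refine option_ext fun x => ⟨fun hx => ?_, fun hx => by simp [seqRoot] at hx⟩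
      have := h γ x hx
      rw [single] at this
      split at this
      · subst ‹γ = 0›; rw [hf0] at hx; cases hx
      · cases this
  | some y =>
      right
      have hy : y = a := by
        have := h 0 y hf0
        rw [single_zero] at this
        exact (some_eq_some_symm this).symm
      funext γ
      rcases eq_or_ne γ 0 with rfl | hγ
      · rw [hf0, hy, single_zero]
      · rw [show single a γ = none from if_neg hγ]
        refine eq_none_of_not_isSome fun hs => ?_
        obtain ⟨x, hx⟩ := isSome_iff_exists.1 hs
        have := h γ x hx
        rw [show single a γ = none from if_neg hγ] at this
        cases this

variable (hκ : ℵ₀ < κ) {ι : Type} (e : ι → O κ) (B : ι → Set Z) (lbl : BLabel Z)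

/-- The two-level tree: a root with an immediate successor for each `i : ι`. -/
def twoT : Set (PreSeq κ) := insert (seqRoot κ) (Set.range fun i => single (e i))

/-- The two-level labelling. -/
noncomputable def twoh : PreSeq κ → BLabel Z :=
  open scoped Classical in
  fun f => if f = seqRoot κ then lbl else
    BLabel.leaf (⋃ i, if f = single (e i) then B i else ∅)

lemma twoh_root : twoh e B lbl (seqRoot κ) = lbl := if_pos rfl

lemma twoh_single (he : Function.Injective e) (i : ι) : twoh e B lbl (single (e i)) = BLabel.leaf (B i) := by
  rw [twoh, if_neg (single_ne_root _)]
  congr 1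
  ext x
  simp only [Set.mem_iUnion]
  constructor
  · rintro ⟨j, hj⟩
    split at hj
    · rename_i hj'
      have : e i = e j := by
        have := congrFun hj' 0
        rw [single_zero, single_zero] at this
        exact some_eq_some_symm this
      rwa [he this]
    · exact absurd hj (Set.notMem_empty x)
  · intro hx
    exact ⟨i, by rw [if_pos rfl]; exact hx⟩

lemma nonroot_unique {c : Set (PreSeq κ)} (hc : IsChain seqLE c) (hsub : c ⊆ twoT e)
    {f g : PreSeq κ} (hf : f ∈ c) (hg : g ∈ c) (hfr : f ≠ seqRoot κ) (hgr : g ≠ seqRoot κ) :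
    f = g := by
  obtain ⟨i, hi⟩ : ∃ i, f = single (e i) := by
    rcases hsub hf with h | ⟨i, hi⟩
    · exact absurd h hfr
    · exact ⟨i, hi.symm⟩
  obtain ⟨j, hj⟩ : ∃ j, g = single (e j) := by
    rcases hsub hg with h | ⟨j, hj⟩
    · exact absurd h hgr
    · exact ⟨j, hj.symm⟩
  rcases eq_or_ne f g with h | hne
  · exact h
  · rcases hc hf hg hne with h | h
    · rw [hi, hj] at h ⊢
      rw [single_le_single h]
    · rw [hi, hj] at h ⊢
      rw [single_le_single h]

lemma two_chain_max {c : Set (PreSeq κ)} (hc : IsChain seqLE c) (hsub : c ⊆ twoT e)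
    (hne : c.Nonempty) : ∃ m ∈ c, ∀ f ∈ c, seqLE f m := by
  by_cases hs : ∃ f ∈ c, f ≠ seqRoot κ
  · obtain ⟨f, hf, hfr⟩ := hs
    refine ⟨f, hf, fun g hg => ?_⟩
    rcases eq_or_ne g (seqRoot κ) with rfl | hgr
    · exact seqRoot_seqLE f
    · rw [nonroot_unique e hc hsub hg hf hgr hfr]
      exact seqLE_refl f
  · obtain ⟨f, hf⟩ := hne
    refine ⟨f, hf, fun g hg => ?_⟩
    have hgr : g = seqRoot κ := not_not.1 fun h => hs ⟨g, hg, h⟩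
    rw [hgr]
    exact seqRoot_seqLE f

/-- The two-level code. -/
noncomputable def twoCode (he : Function.Injective e) (hι : Cardinal.mk ι ≤ κ)
    (hlbl : lbl = BLabel.inter ∨ lbl = BLabel.union) [Nonempty ι] :
    BorelStarCode κ Z Set.univ where
  T := twoT e
  h := twoh e B lbl
  mem_isSeq := by
    rintro f (rfl | ⟨i, rfl⟩)
    · exact isSeq_seqRoot (lt_trans Cardinal.aleph0_pos hκ)
    · exact isSeq_single hκ _
  root_mem := Set.mem_insert _ _
  downward := by
    rintro f (rfl | ⟨i, rfl⟩) g hgseq hgf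
    · rw [seqLE_seqRoot hgf]
      exact Set.mem_insert _ _
    · rcases le_single hgf with rfl | rfl
      · exact Set.mem_insert _ _
      · exact Set.mem_insert_of_mem _ ⟨i, rfl⟩
  card_le := by
    have haleph : ℵ₀ ≤ Cardinal.lift.{1} κ := Cardinal.aleph0_le_lift.2 hκ.le
    calc Cardinal.mk ↥(twoT e)
        ≤ Cardinal.mk ↥(Set.range fun i => single (e i)) + 1 := Cardinal.mk_insert_le
      _ ≤ Cardinal.lift.{1} κ + 1 := by
          refine add_le_add_left ?_ 1
          have h1 := Cardinal.mk_range_le_lift (f := fun i => single (e i : O κ))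
          rw [Cardinal.lift_id'] at h1
          exact h1.trans (Cardinal.lift_le.2 hι)
      _ = Cardinal.lift.{1} κ := Cardinal.add_one_eq haleph
  no_long_chain := by
    intro c hsub hchain
    have haleph : ℵ₀ ≤ Cardinal.lift.{1} κ := Cardinal.aleph0_le_lift.2 hκ.le
    by_cases hs : ∃ f ∈ c, f ≠ seqRoot κ
    · obtain ⟨f₀, hf₀, hf₀r⟩ := hs
      have hsub2 : c ⊆ {seqRoot κ, f₀} := by
        intro g hg
        rcases eq_or_ne g (seqRoot κ) with rfl | hgr
        · exact Set.mem_insert _ _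
        · exact Set.mem_insert_of_mem _ (nonroot_unique e hchain hsub hg hf₀ hgr hf₀r)
      calc Cardinal.mk ↥c ≤ Cardinal.mk ↥({seqRoot κ, f₀} : Set (PreSeq κ)) :=
            Cardinal.mk_le_mk_of_subset hsub2
        _ ≤ Cardinal.mk ↥({f₀} : Set (PreSeq κ)) + 1 := Cardinal.mk_insert_le
        _ = 1 + 1 := by rw [Cardinal.mk_singleton]
        _ < ℵ₀ := Cardinal.add_lt_aleph0 Cardinal.one_lt_aleph0 Cardinal.one_lt_aleph0
        _ ≤ Cardinal.lift.{1} κ := haleph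
    · have hsub2 : c ⊆ {seqRoot κ} := fun g hg => not_not.1 fun h => hs ⟨g, hg, h⟩
      calc Cardinal.mk ↥c ≤ Cardinal.mk ↥({seqRoot κ} : Set (PreSeq κ)) :=
            Cardinal.mk_le_mk_of_subset hsub2
        _ = 1 := Cardinal.mk_singleton _
        _ < ℵ₀ := Cardinal.one_lt_aleph0
        _ ≤ Cardinal.lift.{1} κ := haleph
  chain_sup := by
    intro c hsub hne hchain
    obtain ⟨m, hm, hmax⟩ := two_chain_max e hchain hsub hne
    rw [seqSup_eq_of_max hchain hm hmax]
    exact hsub hm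
  label_leaf := by
    rintro f (rfl | ⟨i, rfl⟩) hleaf
    · exfalso
      have := hleaf.2 (single (e (Classical.arbitrary ι)))
        (Set.mem_insert_of_mem _ ⟨_, rfl⟩) (seqRoot_seqLE _)
      exact single_ne_root _ this
    · exact ⟨B i, Set.mem_univ _, twoh_single e B lbl he i⟩
  label_node := by
    rintro f (rfl | ⟨i, rfl⟩) hnl
    · rw [twoh_root]
      exact hlbl
    · exfalso
      refine hnl ⟨Set.mem_insert_of_mem _ ⟨i, rfl⟩, ?_⟩
      rintro g (rfl | ⟨j, rfl⟩) hle
      · exact (seqLE_seqRoot hle).symm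
      · exact congrArg single (single_le_single hle).symm

end TwoLevel

section TwoWin

variable {κ : Cardinal.{0}} {Z : Type*}
variable (hκ : ℵ₀ < κ) {ι : Type} (e : ι → O κ) (B : ι → Set Z)

lemma immSucc_root_single (i : ι) : ImmSucc (twoT e) (seqRoot κ) (single (e i)) := by
  refine ⟨Or.inr ⟨i, rfl⟩, seqRoot_seqLE _, Ne.symm (single_ne_root _), ?_⟩
  rintro p (rfl | ⟨j, rfl⟩) h1 h2
  · exact Or.inl rfl
  · exact Or.inr (congrArg single (single_le_single h2))

variable [Nonempty ι] (he : Function.Injective e) (hι : Cardinal.mk ι ≤ κ)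

lemma twoCode_union_win :
    {x | IIWinsBStar (twoCode hκ e B BLabel.union he hι (Or.inr rfl)) x} = ⋃ i, B i := by
  set tc := twoCode hκ e B BLabel.union he hι (Or.inr rfl) with htc
  have hroot : tc.h (seqRoot κ) = BLabel.union := twoh_root e B _
  have hsingle : ∀ i, tc.h (single (e i)) = BLabel.leaf (B i) := twoh_single e B _ he
  ext x
  simp only [Set.mem_setOf_eq, Set.mem_iUnion]
  constructor
  · rintro ⟨σ, h1, h2⟩
    have himm := h1 (seqRoot κ) Reach.root hroot
    have hr2 : Reach tc σ (σ (seqRoot κ)) := Reach.union _ Reach.root hroot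
    obtain ⟨i₀, hi₀⟩ : ∃ i, σ (seqRoot κ) = single (e i) := by
      rcases himm.1 with h | ⟨i, hi⟩
      · exact absurd h.symm himm.2.2.1
      · exact ⟨i, hi.symm⟩
    refine ⟨i₀, h2 _ _ hr2 ?_⟩
    rw [hi₀]
    exact hsingle i₀
  · rintro ⟨i₀, hx⟩
    have hchar : ∀ f, Reach tc (fun _ => single (e i₀)) f →
        f = seqRoot κ ∨ f = single (e i₀) := by
      intro f hf
      induction hf with
      | root => exact Or.inl rfl
      | inter f g hf hlbl hsucc ih =>
          exfalso
          rcases ih with rfl | rfl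
          · rw [hroot] at hlbl
            cases hlbl
          · rw [hsingle i₀] at hlbl
            cases hlbl
      | union f hf hlbl ih => exact Or.inr rfl
      | lim c hne hchain hall ih =>
          by_cases hs : single (e i₀) ∈ c
          · refine Or.inr (seqSup_eq_of_max hchain hs fun g hg => ?_)
            rcases ih g hg with rfl | rfl
            · exact seqRoot_seqLE _
            · exact seqLE_refl _
          · obtain ⟨f, hf⟩ := hne
            have hfr : f = seqRoot κ := by
              rcases ih f hf with rfl | rfl
              · rfl
              · exact absurd hf hs
            subst hfr
            refine Or.inl (seqSup_eq_of_max hchain hf fun g hg => ?_)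
            rcases ih g hg with rfl | rfl
            · exact seqLE_refl _
            · exact absurd hg hs
    refine ⟨fun _ => single (e i₀), ?_, ?_⟩
    · intro f hr hlbl
      rcases hchar f hr with rfl | rfl
      · exact immSucc_root_single e i₀
      · rw [hsingle i₀] at hlbl
        cases hlbl
    · intro f s hr hlbl
      rcases hchar f hr with rfl | rfl
      · rw [hroot] at hlbl
        cases hlbl
      · rw [hsingle i₀] at hlbl
        injection hlbl with hh
        rw [← hh]
        exact hx

lemma twoCode_inter_win :
    {x | IIWinsBStar (twoCode hκ e B BLabel.inter he hι (Or.inl rfl)) x} = ⋂ i, B i := by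
  set tc := twoCode hκ e B BLabel.inter he hι (Or.inl rfl) with htc
  have hroot : tc.h (seqRoot κ) = BLabel.inter := twoh_root e B _
  have hsingle : ∀ i, tc.h (single (e i)) = BLabel.leaf (B i) := twoh_single e B _ he
  ext x
  simp only [Set.mem_setOf_eq, Set.mem_iInter]
  constructor
  · rintro ⟨σ, h1, h2⟩ i
    have hr : Reach tc σ (single (e i)) :=
      Reach.inter _ _ Reach.root hroot (immSucc_root_single e i)
    exact h2 _ _ hr (hsingle i)
  · intro hx
    have hchar : ∀ f, Reach tc id f → f ∈ twoT e := by
      intro f hf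
      induction hf with
      | root => exact Set.mem_insert _ _
      | inter f g hf hlbl hsucc ih => exact hsucc.1
      | union f hf hlbl ih =>
          exfalso
          rcases ih with rfl | ⟨i, rfl⟩
          · rw [hroot] at hlbl
            cases hlbl
          · rw [hsingle i] at hlbl
            cases hlbl
      | lim c hne hchain hall ih =>
          obtain ⟨m, hm, hmax⟩ := two_chain_max e hchain (fun g hg => ih g hg) hne
          rw [seqSup_eq_of_max hchain hm hmax]
          exact ih m hm
    refine ⟨id, ?_, ?_⟩
    · intro f hr hlbl
      exfalso
      rcases hchar f hr with rfl | ⟨i, rfl⟩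
      · rw [hroot] at hlbl
        cases hlbl
      · rw [hsingle i] at hlbl
        cases hlbl
    · intro f s hr hlbl
      rcases hchar f hr with rfl | ⟨i, rfl⟩
      · rw [hroot] at hlbl
        cases hlbl
      · rw [hsingle i] at hlbl
        injection hlbl with hh
        rw [← hh]
        exact hx i

end TwoWin

section Closure

variable {κ : Cardinal.{0}} {Z : Type*} {Bas : Set (Set Z)}

lemma exists_embedding (hι : Cardinal.mk ι ≤ κ) : ∃ e : ι → O κ, Function.Injective e := by
  have h1 : Cardinal.mk (O κ) = Cardinal.lift.{1} κ := by
    rw [Ordinal.mk_Iio_ordinal, Cardinal.card_ord]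
  have h2 : Cardinal.lift.{1} (Cardinal.mk ι) ≤ Cardinal.lift.{0} (Cardinal.mk (O κ)) := by
    rw [Cardinal.lift_id', h1]
    exact Cardinal.lift_le.2 hι
  obtain ⟨emb⟩ := Cardinal.lift_mk_le'.1 h2
  exact ⟨emb, emb.injective⟩

lemma nonempty_code (hκ : ℵ₀ < κ) (hBas : Bas.Nonempty) :
    Nonempty (BorelStarCode κ Z Bas) := by
  obtain ⟨s, hs⟩ := hBas
  exact ⟨(exists_trivial_code hκ hs).choose⟩

lemma isBorelStar_basic (hκ : ℵ₀ < κ) {s : Set Z} (hs : s ∈ Bas) : IsBorelStar κ Bas s := by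
  obtain ⟨c, hc⟩ := exists_trivial_code hκ hs
  exact ⟨c, hc.symm⟩

lemma twoT_leaf {ι : Type} [Nonempty ι] {e : ι → O κ} {f : PreSeq κ}
    (hleaf : IsLeaf (twoT e) f) : ∃ i, f = single (e i) := by
  rcases hleaf.1 with rfl | ⟨i, rfl⟩
  · exfalso
    have := hleaf.2 (single (e (Classical.arbitrary ι)))
      (Set.mem_insert_of_mem _ ⟨_, rfl⟩) (seqRoot_seqLE _)
    exact single_ne_root _ this
  · exact ⟨i, rfl⟩

lemma isBorelStar_iUnion (hκ : ℵ₀ < κ) (hBas : Bas.Nonempty)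
    {ι : Type} [Nonempty ι] (hι : Cardinal.mk ι ≤ κ) (B : ι → Set Z)
    (hB : ∀ i, IsBorelStar κ Bas (B i)) : IsBorelStar κ Bas (⋃ i, B i) := by
  obtain ⟨e, he⟩ := exists_embedding hι
  have H : ∀ f, IsLeaf (twoCode hκ e B BLabel.union he hι (Or.inr rfl)).T f →
      ∀ s, (twoCode hκ e B BLabel.union he hι (Or.inr rfl)).h f = BLabel.leaf s →
      IsBorelStar κ Bas s := by
    intro f hleaf s hs
    obtain ⟨i, rfl⟩ := twoT_leaf hleaf
    have hs2 : BLabel.leaf (B i) = BLabel.leaf s :=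
      (twoh_single e B BLabel.union he i).symm.trans hs
    injection hs2 with hh
    rw [← hh]
    exact hB i
  have := isBorelStar_graft hκ (twoCode hκ e B BLabel.union he hι (Or.inr rfl))
    (nonempty_code hκ hBas) H
  rwa [twoCode_union_win hκ e B he hι] at this

lemma isBorelStar_iInter (hκ : ℵ₀ < κ) (hBas : Bas.Nonempty)
    {ι : Type} [Nonempty ι] (hι : Cardinal.mk ι ≤ κ) (B : ι → Set Z)
    (hB : ∀ i, IsBorelStar κ Bas (B i)) : IsBorelStar κ Bas (⋂ i, B i) := by
  obtain ⟨e, he⟩ := exists_embedding hι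
  have H : ∀ f, IsLeaf (twoCode hκ e B BLabel.inter he hι (Or.inl rfl)).T f →
      ∀ s, (twoCode hκ e B BLabel.inter he hι (Or.inl rfl)).h f = BLabel.leaf s →
      IsBorelStar κ Bas s := by
    intro f hleaf s hs
    obtain ⟨i, rfl⟩ := twoT_leaf hleaf
    have hs2 : BLabel.leaf (B i) = BLabel.leaf s :=
      (twoh_single e B BLabel.inter he i).symm.trans hs
    injection hs2 with hh
    rw [← hh]
    exact hB i
  have := isBorelStar_graft hκ (twoCode hκ e B BLabel.inter he hι (Or.inl rfl))
    (nonempty_code hκ hBas) H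
  rwa [twoCode_inter_win hκ e B he hι] at this

end Closure

section Borel

variable {κ : Cardinal.{0}}

lemma ord_zero_lt (hκ₁ : ℵ₀ < κ) : (0 : Ordinal) < κ.ord := by
  rw [← Cardinal.ord_zero]
  exact Cardinal.ord_lt_ord.2 (lt_trans Cardinal.aleph0_pos hκ₁)

lemma basicOpens_nonempty (hκ₁ : ℵ₀ < κ) : (basicOpens κ).Nonempty :=
  ⟨basicOpen κ 0 (fun _ => false), 0, ord_zero_lt hκ₁, fun _ => false, rfl⟩

/-- Every `κ`-Borel set is `Borel*`. -/
lemma isKBorel_isBorelStar (hκ₁ : ℵ₀ < κ) {s : Set (Point κ)} (h : IsKBorel κ s) :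
    IsBorelStar κ (basicOpens κ) s := by
  have h0 : (0 : Ordinal) < κ.ord := ord_zero_lt hκ₁
  have h1 : (1 : Ordinal) < κ.ord := by
    rw [← Cardinal.ord_one]
    exact Cardinal.ord_lt_ord.2 (lt_trans Cardinal.one_lt_aleph0 hκ₁)
  have hBas : (basicOpens κ).Nonempty := basicOpens_nonempty hκ₁
  have hBool : Cardinal.mk Bool ≤ κ := by
    rw [Cardinal.mk_bool]
    exact_mod_cast le_trans (Cardinal.nat_lt_aleph0 2).le hκ₁.le
  have hempty : IsBorelStar κ (basicOpens κ) (∅ : Set (Point κ)) := by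
    have heq : (⋂ b : Bool, basicOpen κ 1 (fun _ => b)) = (∅ : Set (Point κ)) := by
      ext η
      simp only [Set.mem_iInter, Set.mem_empty_iff_false, iff_false]
      intro hη
      have hf := hη false ⟨0, h0⟩ zero_lt_one
      have ht := hη true ⟨0, h0⟩ zero_lt_one
      exact Bool.noConfusion (hf.symm.trans ht)
    rw [← heq]
    exact isBorelStar_iInter hκ₁ hBas hBool _
      (fun b => isBorelStar_basic hκ₁ ⟨1, h1, fun _ => b, rfl⟩)
  have huniv : IsBorelStar κ (basicOpens κ) (Set.univ : Set (Point κ)) := by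
    refine isBorelStar_basic hκ₁ ⟨0, h0, fun _ => false, ?_⟩
    ext η
    simp only [Set.mem_univ, true_iff, basicOpen, Set.mem_setOf_eq]
    intro γ hγ
    exact absurd hγ (by simp)
  induction h with
  | basic s hs => exact isBorelStar_basic hκ₁ hs
  | iUnion ι hι f hf ih =>
      rcases isEmpty_or_nonempty ι with hemp | hne
      · rw [Set.iUnion_of_empty f]
        exact hempty
      · exact isBorelStar_iUnion hκ₁ hBas hι f ih
  | iInter ι hι f hf ih =>
      rcases isEmpty_or_nonempty ι with hemp | hne
      · rw [Set.iInter_of_empty f]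
        exact huniv
      · exact isBorelStar_iInter hκ₁ hBas hι f ih

end Borel

/-- Suppose `T` is a closed `κ⁺,κ`-tree and `h` labels each leaf of `T`
with a `κ`-Borel subset of `2^κ` and every other node with `∪` or `∩` (i.e. `(T, h)` is a
`Borel*`-code with Borel leaf labels). Then the set of `η` such that player II has a
winning strategy in `B*(T, h, η)` is a `Borel*` set. -/
theorem isBorelStar_of_borelLeaves (κ : Cardinal.{0}) (hκ₁ : ℵ₀ < κ) (hκ₂ : κ ^< κ = κ)
    (code : BorelStarCode κ (Point κ) {s | IsKBorel κ s}) :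
    IsBorelStar κ (basicOpens κ) {η : Point κ | IIWinsBStar code η} := by
  refine isBorelStar_graft hκ₁ code (nonempty_code hκ₁ (basicOpens_nonempty hκ₁)) ?_
  intro f hleaf s hs
  obtain ⟨s', hs', heq⟩ := code.label_leaf f hleaf.1 hleaf
  rw [hs] at heq
  injection heq with hh
  rw [hh]
  exact isKBorel_isBorelStar hκ₁ hs'

end GenCantor
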